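/- Let G be a finite simple graph that is a disjoint union of trees (a forest), and let κ : E(G) → {1,…,k} be a proper edge coloring. Let π be any permutation of {1,…,k} and set σ = τ_{π(1)} τ_{π(2)} ⋯ τ_{π(k)}. Then every connected component T of G is mapped to itself by σ, and σ restricted to the vertex set of T is a single cycle of length |V(T)|. In particular, if G is a tree on n vertices, then any product of all the generators τ_1,…,τ_k, each appearing exactly once, in any order, is an n-cycle. -/

import Mathlib

open scoped Classical

/-- A proper edge coloring of a finite simple graph `G` with colors `{1, …, k}`:
it assigns colors in `{1, …, k}` to edges, is surjective onto `{1, …, k}`, and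
incident edges receive distinct colors. -/
def IsProperEdgeColoring {V : Type*} (G : SimpleGraph V) (k : ℕ) (κ : Sym2 V → ℕ) : Prop :=
  (∀ e ∈ G.edgeSet, κ e ∈ Finset.Icc 1 k) ∧
  (∀ a ∈ Finset.Icc 1 k, ∃ e ∈ G.edgeSet, κ e = a) ∧
  (∀ u v w : V, G.Adj u v → G.Adj u w → v ≠ w → κ s(u, v) ≠ κ s(u, w))
/-- `IsToggle G κ a τ` says that the permutation `τ` is the product of the
transpositions `(i j)` over all edges `{i,j}` of `G` colored `a`: it swaps the two
endpoints of every edge colored `a` and fixes all other vertices. -/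
def IsToggle {V : Type*} (G : SimpleGraph V) (κ : Sym2 V → ℕ) (a : ℕ) (τ : Equiv.Perm V) : Prop :=
  ∀ v w : V, v ≠ w → (τ v = w ↔ G.Adj v w ∧ κ s(v, w) = a)

section Aux

variable {V : Type*}

lemma toggle_reach {G : SimpleGraph V} {κ : Sym2 V → ℕ} {a : ℕ} {τ : Equiv.Perm V}
    (h : IsToggle G κ a τ) (v : V) : G.Reachable v (τ v) := by
  by_cases hv : τ v = v
  · rw [hv]
  · exact ((h v (τ v) (Ne.symm hv)).mp rfl).1.reachable

lemma prod_reach {G : SimpleGraph V} {κ : Sym2 V → ℕ} {τ : ℕ → Equiv.Perm V} {l : List ℕ}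
    (h : ∀ a ∈ l, IsToggle G κ a (τ a)) (v : V) : G.Reachable v ((l.map τ).prod v) := by
  induction l generalizing v with
  | nil => simpa using SimpleGraph.Reachable.refl v
  | cons a t ih =>
    simp only [List.map_cons, List.prod_cons, Equiv.Perm.mul_apply]
    exact (ih (fun b hb => h b (List.mem_cons_of_mem _ hb)) v).trans
      (toggle_reach (h a List.mem_cons_self) _)

lemma reach_inv {G : SimpleGraph V} {g : Equiv.Perm V} (h : ∀ v, G.Reachable v (g v)) (v : V) :
    G.Reachable v (g⁻¹ v) := by
  have := h (g⁻¹ v)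
  rw [show g (g⁻¹ v) = v from by simp] at this
  exact this.symm

/-- Decomposing reachability in `G` through the edge `s(u,v)`. -/
lemma reach_delete {G : SimpleGraph V} (u v : V) {x y : V} (p : G.Walk x y) :
    (G.deleteEdges {s(u, v)}).Reachable x y ∨
    ((G.deleteEdges {s(u, v)}).Reachable x u ∧ (G.deleteEdges {s(u, v)}).Reachable v y) ∨
    ((G.deleteEdges {s(u, v)}).Reachable x v ∧ (G.deleteEdges {s(u, v)}).Reachable u y) := by
  induction p with
  | nil => exact Or.inl (SimpleGraph.Reachable.refl _)
  | @cons a b cc hab q ih =>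
    by_cases he : s(a, b) = s(u, v)
    · rw [Sym2.eq_iff] at he
      rcases he with ⟨rfl, rfl⟩ | ⟨rfl, rfl⟩
      · rcases ih with h1 | ⟨h2, h3⟩ | ⟨h2, h3⟩
        · exact Or.inr (Or.inl ⟨SimpleGraph.Reachable.refl _, h1⟩)
        · exact Or.inl (h2.symm.trans h3)
        · exact Or.inl h3
      · rcases ih with h1 | ⟨h2, h3⟩ | ⟨h2, h3⟩
        · exact Or.inr (Or.inr ⟨SimpleGraph.Reachable.refl _, h1⟩)
        · exact Or.inl h3
        · exact Or.inl (h2.symm.trans h3)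
    · have hab' : (G.deleteEdges {s(u, v)}).Adj a b := by
        rw [SimpleGraph.deleteEdges_adj]
        exact ⟨hab, by simpa using he⟩
      rcases ih with h1 | ⟨h2, h3⟩ | ⟨h2, h3⟩
      · exact Or.inl (hab'.reachable.trans h1)
      · exact Or.inr (Or.inl ⟨hab'.reachable.trans h2, h3⟩)
      · exact Or.inr (Or.inr ⟨hab'.reachable.trans h2, h3⟩)

/-- Multiplying a permutation by a transposition joining two distinct cycles merges them. -/
lemma sameCycle_mul_swap {α : Type*} [Finite α] [DecidableEq α] (f : Equiv.Perm α) (a b : α)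
    (h : ¬ f.SameCycle a b) (x y : α) :
    (f * Equiv.swap a b).SameCycle x y ↔
      f.SameCycle x y ∨ (f.SameCycle x a ∧ f.SameCycle b y) ∨
        (f.SameCycle x b ∧ f.SameCycle a y) := by
  set g := f * Equiv.swap a b with hg
  have hga : g a = f b := by simp [hg]
  have hgb : g b = f a := by simp [hg]
  have hgz : ∀ z, z ≠ a → z ≠ b → g z = f z := by
    intro z hza hzb
    simp [hg, Equiv.swap_apply_of_ne_of_ne hza hzb]
  have hex : ∃ n, 0 < n ∧ (f ^ n) b = b := by
    refine ⟨orderOf f, ?_, by rw [pow_orderOf_eq_one]; rfl⟩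
    exact orderOf_pos f
  set m := Nat.find hex with hm
  obtain ⟨hm0, hmb⟩ := Nat.find_spec hex
  have hmin : ∀ j, 0 < j → j < m → (f ^ j) b ≠ b := by
    intro j hj0 hjm hjb
    exact Nat.find_min hex hjm ⟨hj0, hjb⟩
  have hne_a : ∀ j : ℕ, (f ^ j) b ≠ a := by
    intro j hj
    exact h (Equiv.Perm.SameCycle.symm ⟨(j : ℤ), by rw [zpow_natCast]; exact hj⟩)
  have key : ∀ j, j < m → (g ^ (j + 1)) a = (f ^ (j + 1)) b := by
    intro j
    induction j with
    | zero => intro _; simp [hga]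
    | succ i hi =>
      intro hlt
      have h1 := hi (by omega)
      rw [pow_succ' g (i + 1), Equiv.Perm.mul_apply, h1]
      have hne_b : (f ^ (i + 1)) b ≠ b := hmin _ (Nat.succ_pos i) (by omega)
      rw [hgz _ (hne_a _) hne_b, pow_succ' f (i + 1)]
      rfl
  have hscab : g.SameCycle a b := by
    refine ⟨(m : ℤ), ?_⟩
    rw [zpow_natCast]
    have hk := key (m - 1) (by omega)
    rw [show m - 1 + 1 = m by omega] at hk
    rw [hk, hmb]
  have hstep : ∀ z w : α,
      (f.SameCycle x z ∨ (f.SameCycle x a ∧ f.SameCycle b z) ∨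
        (f.SameCycle x b ∧ f.SameCycle a z)) → w = g z →
      (f.SameCycle x w ∨ (f.SameCycle x a ∧ f.SameCycle b w) ∨
        (f.SameCycle x b ∧ f.SameCycle a w)) := by
    intro z w hz hw
    subst hw
    by_cases hza : z = a
    · subst hza
      rw [hga]
      rcases hz with h1 | ⟨h2, h3⟩ | ⟨h2, h3⟩
      · exact Or.inr (Or.inl ⟨h1, ⟨(1 : ℤ), by simp⟩⟩)
      · exact absurd h3.symm h
      · exact Or.inl (h2.trans ⟨(1 : ℤ), by simp⟩)
    by_cases hzb : z = b
    · subst hzb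
      rw [hgb]
      rcases hz with h1 | ⟨h2, h3⟩ | ⟨h2, h3⟩
      · exact Or.inr (Or.inr ⟨h1, ⟨(1 : ℤ), by simp⟩⟩)
      · exact Or.inl (h2.trans ⟨(1 : ℤ), by simp⟩)
      · exact absurd h3 h
    · rw [hgz z hza hzb]
      rcases hz with h1 | ⟨h2, h3⟩ | ⟨h2, h3⟩
      · exact Or.inl (h1.trans ⟨(1 : ℤ), by simp⟩)
      · exact Or.inr (Or.inl ⟨h2, h3.trans ⟨(1 : ℤ), by simp⟩⟩)
      · exact Or.inr (Or.inr ⟨h2, h3.trans ⟨(1 : ℤ), by simp⟩⟩)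
  have hstepR : ∀ z, g.SameCycle z (f z) := by
    intro z
    by_cases hza : z = a
    · subst hza
      rw [← hgb]
      exact hscab.trans ⟨(1 : ℤ), by simp⟩
    by_cases hzb : z = b
    · subst hzb
      rw [← hga]
      exact hscab.symm.trans ⟨(1 : ℤ), by simp⟩
    · rw [← hgz z hza hzb]
      exact ⟨(1 : ℤ), by simp⟩
  have hf_imp : ∀ p q : α, f.SameCycle p q → g.SameCycle p q := by
    intro p q hpq
    obtain ⟨i, hilt, hi⟩ := hpq.exists_pow_eq'
    subst hi
    clear hpq hilt
    induction i with
    | zero => simpa using Equiv.Perm.SameCycle.refl g p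
    | succ n ihn =>
      refine ihn.trans ?_
      have h2 := hstepR ((f ^ n) p)
      rwa [show f ((f ^ n) p) = (f ^ (n + 1)) p by rw [pow_succ' f n]; rfl] at h2
  constructor
  · intro hxy
    obtain ⟨i, hilt, hi⟩ := hxy.exists_pow_eq'
    subst hi
    clear hxy hilt
    induction i with
    | zero => exact Or.inl (by simpa using Equiv.Perm.SameCycle.refl f x)
    | succ n ihn =>
      exact hstep ((g ^ n) x) ((g ^ (n + 1)) x) ihn (by rw [pow_succ' g n]; rfl)
  · rintro (h1 | ⟨h2, h3⟩ | ⟨h2, h3⟩)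
    · exact hf_imp _ _ h1
    · exact ((hf_imp _ _ h2).trans hscab).trans (hf_imp _ _ h3)
    · exact ((hf_imp _ _ h2).trans hscab.symm).trans (hf_imp _ _ h3)

lemma toggle_delete_ne {G : SimpleGraph V} {κ : Sym2 V → ℕ} {u v : V} {a : ℕ} {τ : Equiv.Perm V}
    (ha : a ≠ κ s(u, v)) (hτ : IsToggle G κ a τ) :
    IsToggle (G.deleteEdges {s(u, v)}) κ a τ := by
  intro x y hxy
  rw [hτ x y hxy, SimpleGraph.deleteEdges_adj]
  constructor
  · rintro ⟨hadj, hcol⟩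
    refine ⟨⟨hadj, ?_⟩, hcol⟩
    simp only [Set.mem_singleton_iff]
    intro hh
    exact ha (hh ▸ hcol).symm
  · rintro ⟨⟨hadj, _⟩, hcol⟩
    exact ⟨hadj, hcol⟩

lemma toggle_delete_eq {G : SimpleGraph V} [DecidableEq V] {κ : Sym2 V → ℕ} {u v : V}
    (hadj : G.Adj u v)
    (hprop : ∀ u v w : V, G.Adj u v → G.Adj u w → v ≠ w → κ s(u, v) ≠ κ s(u, w))
    {τ : Equiv.Perm V} (hτ : IsToggle G κ (κ s(u, v)) τ) :
    IsToggle (G.deleteEdges {s(u, v)}) κ (κ s(u, v)) (τ * Equiv.swap u v) := by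
  have hvu : τ v = u := (hτ v u hadj.ne.symm).mpr ⟨hadj.symm, by rw [Sym2.eq_swap]⟩
  have huv : τ u = v := (hτ u v hadj.ne).mpr ⟨hadj, rfl⟩
  intro x y hxy
  simp only [Equiv.Perm.mul_apply]
  by_cases hxu : x = u
  · subst hxu
    rw [Equiv.swap_apply_left, hvu]
    constructor
    · intro hh; exact absurd hh hxy
    · rintro ⟨hadj', hcol⟩
      rw [SimpleGraph.deleteEdges_adj] at hadj'
      obtain ⟨hadjG, hne⟩ := hadj'
      have hyv : v ≠ y := by
        intro hh; subst hh; simp at hne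
      exact absurd hcol.symm (hprop x v y hadj hadjG hyv)
  by_cases hxv : x = v
  · subst hxv
    rw [Equiv.swap_apply_right, huv]
    constructor
    · intro hh; exact absurd hh hxy
    · rintro ⟨hadj', hcol⟩
      rw [SimpleGraph.deleteEdges_adj] at hadj'
      obtain ⟨hadjG, hne⟩ := hadj'
      have hyu : u ≠ y := by
        intro hh; subst hh
        rw [Sym2.eq_swap] at hne; simp at hne
      have : κ s(x, u) ≠ κ s(x, y) := hprop x u y hadj.symm hadjG hyu
      rw [Sym2.eq_swap] at this
      exact absurd hcol.symm this
  · rw [Equiv.swap_apply_of_ne_of_ne hxu hxv, hτ x y hxy, SimpleGraph.deleteEdges_adj]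
    constructor
    · rintro ⟨hadjG, hcol⟩
      refine ⟨⟨hadjG, ?_⟩, hcol⟩
      simp only [Set.mem_singleton_iff, Sym2.eq_iff]
      rintro (⟨rfl, rfl⟩ | ⟨rfl, rfl⟩)
      · exact hxu rfl
      · exact hxv rfl
    · rintro ⟨⟨hadjG, _⟩, hcol⟩
      exact ⟨hadjG, hcol⟩

/-- The main induction: for any forest with a partial proper coloring whose colors all lie
in a duplicate-free list `l`, cycles of the product of toggles are the components. -/
lemma aux_main {V : Type*} [Fintype V] :
    ∀ (n : ℕ) (G : SimpleGraph V), G.edgeSet.ncard = n → G.IsAcyclic →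
    ∀ (κ : Sym2 V → ℕ) (l : List ℕ), l.Nodup →
    (∀ e ∈ G.edgeSet, κ e ∈ l) →
    (∀ u v w : V, G.Adj u v → G.Adj u w → v ≠ w → κ s(u, v) ≠ κ s(u, w)) →
    ∀ (τ : ℕ → Equiv.Perm V), (∀ a ∈ l, IsToggle G κ a (τ a)) →
    ∀ x y : V, ((l.map τ).prod).SameCycle x y ↔ G.Reachable x y := by
  intro n
  induction n using Nat.strong_induction_on with
  | _ n ih =>
  intro G hcard hG κ l hnd hcov hprop τ hτ x y
  by_cases hE : G.edgeSet = ∅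
  · have hGbot : G = ⊥ := SimpleGraph.edgeSet_eq_empty.mp hE
    have hone : ∀ p ∈ l.map τ, p = (1 : Equiv.Perm V) := by
      rintro p hp
      obtain ⟨a, ha, rfl⟩ := List.mem_map.mp hp
      ext z
      by_contra hz
      have hadj := ((hτ a ha) z (τ a z) (fun hh => hz hh.symm)).mp rfl |>.1
      rw [hGbot] at hadj
      exact hadj
    rw [List.prod_eq_one hone, Equiv.Perm.sameCycle_one, hGbot, SimpleGraph.reachable_bot]
  · obtain ⟨e, he⟩ := Set.nonempty_iff_ne_empty.mpr hE
    obtain ⟨u, v, he⟩ : ∃ u v, s(u, v) ∈ G.edgeSet := Sym2.exists.mp ⟨e, he⟩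
    have hadj : G.Adj u v := he
    set G' := G.deleteEdges {s(u, v)} with hG'def
    have hGle : G' ≤ G := SimpleGraph.deleteEdges_le _
    have hG'edges : G'.edgeSet = G.edgeSet \ {s(u, v)} := SimpleGraph.edgeSet_deleteEdges _
    have hfin : G.edgeSet.Finite := Set.toFinite _
    have hcard' : G'.edgeSet.ncard < n := by
      rw [hG'edges, ← hcard]
      exact Set.ncard_diff_singleton_lt_of_mem he hfin
    have hG' : G'.IsAcyclic := fun w cyc hcyc => hG (cyc.mapLe hGle) (hcyc.mapLe hGle)
    have hbridge : ¬ G'.Reachable u v := by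
      have hb := (SimpleGraph.isAcyclic_iff_forall_edge_isBridge.mp hG) he
      exact SimpleGraph.isBridge_iff.mp hb
    set c := κ s(u, v) with hcdef
    have hmem_c : c ∈ l := hcov _ he
    set τ' : ℕ → Equiv.Perm V := fun a => if a = c then τ c * Equiv.swap u v else τ a with hτ'def
    have hτ'_toggle : ∀ a ∈ l, IsToggle G' κ a (τ' a) := by
      intro a ha
      by_cases hac : a = c
      · subst hac
        simp only [hτ'def, if_pos rfl]
        exact toggle_delete_eq hadj hprop (hτ c ha)
      · simp only [hτ'def, if_neg hac]
        exact toggle_delete_ne hac (hτ a ha)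
    have hcov' : ∀ e ∈ G'.edgeSet, κ e ∈ l := by
      intro e' he'
      rw [hG'edges] at he'
      exact hcov _ he'.1
    have hprop' : ∀ a b d : V, G'.Adj a b → G'.Adj a d → b ≠ d → κ s(a, b) ≠ κ s(a, d) := by
      intro a b d h1 h2 h3
      exact hprop a b d (hGle h1) (hGle h2) h3
    have IH := ih _ hcard' G' rfl hG' κ l hnd hcov' hprop' τ' hτ'_toggle
    -- decompose the list at c
    obtain ⟨l₁, l₂, hl⟩ := List.append_of_mem hmem_c
    have hc1 : c ∉ l₁ := by
      intro hh
      rw [hl] at hnd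
      exact (List.nodup_append'.mp hnd).2.2 hh List.mem_cons_self
    have hc2 : c ∉ l₂ := by
      rw [hl] at hnd
      have := (List.nodup_append.mp hnd).2.1
      exact (List.nodup_cons.mp this).1
    have hmap1 : l₁.map τ' = l₁.map τ := by
      apply List.map_congr_left
      intro a ha
      simp only [hτ'def]
      rw [if_neg (show a ≠ c from fun hh => hc1 (hh ▸ ha))]
    have hmap2 : l₂.map τ' = l₂.map τ := by
      apply List.map_congr_left
      intro a ha
      simp only [hτ'def]
      rw [if_neg (show a ≠ c from fun hh => hc2 (hh ▸ ha))]
    set P₂ : Equiv.Perm V := (l₂.map τ).prod with hP₂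
    set σ' : Equiv.Perm V := ((l).map τ').prod with hσ'
    set a' := P₂⁻¹ u with ha'
    set b' := P₂⁻¹ v with hb'
    have hkey : (l.map τ).prod = σ' * Equiv.swap a' b' := by
      rw [hσ', hl]
      simp only [List.map_append, List.map_cons, List.prod_append, List.prod_cons]
      rw [hmap1, hmap2]
      simp only [hτ'def, if_pos rfl]
      rw [ha', hb', Equiv.swap_apply_apply, inv_inv]
      simp [mul_assoc, Equiv.swap_mul_self_mul]
      rw [← hP₂, mul_inv_cancel_left, Equiv.swap_mul_self_mul]
    -- reachability of a' from u etc.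
    have hτ2 : ∀ a ∈ l₂, IsToggle G' κ a (τ a) := by
      intro a ha
      have ha' : a ∈ l := by rw [hl]; simp [ha]
      have := hτ'_toggle a ha'
      simpa only [hτ'def, if_neg (show a ≠ c from fun hh => hc2 (hh ▸ ha))] using this
    have hreachP₂ : ∀ w, G'.Reachable w (P₂ w) := fun w => prod_reach hτ2 w
    have hra : G'.Reachable u a' := reach_inv hreachP₂ u
    have hrb : G'.Reachable v b' := reach_inv hreachP₂ v
    have hnsc : ¬ σ'.SameCycle a' b' := by
      intro hh
      rw [IH] at hh
      exact hbridge ((hra.trans hh).trans hrb.symm)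
    rw [hkey]
    rw [sameCycle_mul_swap σ' a' b' hnsc x y]
    rw [IH, IH, IH, IH, IH]
    constructor
    · rintro (h1 | ⟨h2, h3⟩ | ⟨h2, h3⟩)
      · exact h1.mono hGle
      · exact ((h2.trans hra.symm).mono hGle).trans
          (hadj.reachable.trans ((hrb.trans h3).mono hGle))
      · exact ((h2.trans hrb.symm).mono hGle).trans
          (hadj.symm.reachable.trans ((hra.trans h3).mono hGle))
    · intro hr
      obtain ⟨p⟩ := hr
      rcases reach_delete u v p with h1 | ⟨h2, h3⟩ | ⟨h2, h3⟩
      · exact Or.inl h1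
      · exact Or.inr (Or.inl ⟨h2.trans hra, hrb.symm.trans h3⟩)
      · exact Or.inr (Or.inr ⟨h2.trans hrb, hra.symm.trans h3⟩)

end Aux

/-- Let `G` be a forest with a proper edge coloring by colors `1, …, k`,
with toggle permutations `τ a` for each color, and let `σ` be the product of all the
`τ a` for `a ∈ {1, …, k}`, each appearing exactly once, in any order (encoded by a
duplicate-free list `l` whose elements are exactly `{1, …, k}`). Then `σ` maps every
connected component to itself, and on each component it is a single cycle covering the
whole component: two vertices are in the same cycle of `σ` iff they are in the same
component. In particular if `G` is a tree on `n` vertices, `σ` is an `n`-cycle. -/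
theorem stmt_6 {V : Type*} [Fintype V] (G : SimpleGraph V) (hG : G.IsAcyclic)
    (k : ℕ) (κ : Sym2 V → ℕ) (hκ : IsProperEdgeColoring G k κ)
    (τ : ℕ → Equiv.Perm V) (hτ : ∀ a ∈ Finset.Icc 1 k, IsToggle G κ a (τ a))
    (l : List ℕ) (hnd : l.Nodup) (hcolors : l.toFinset = Finset.Icc 1 k) :
    (∀ v : V, G.Reachable v ((l.map τ).prod v)) ∧
    (∀ v w : V, ((l.map τ).prod).SameCycle v w ↔ G.Reachable v w) := by
  have hmem : ∀ a ∈ l, a ∈ Finset.Icc 1 k := by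
    intro a ha
    rw [← hcolors]
    exact List.mem_toFinset.mpr ha
  have hτ' : ∀ a ∈ l, IsToggle G κ a (τ a) := fun a ha => hτ a (hmem a ha)
  refine ⟨fun v => prod_reach hτ' v, ?_⟩
  intro v w
  exact aux_main (G.edgeSet.ncard) G rfl hG κ l hnd
    (fun e he => List.mem_toFinset.mp (hcolors ▸ hκ.1 e he)) hκ.2.2 τ hτ' v w
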